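/- Let K be a field, let W and W' be finite-dimensional K-vector spaces carrying nondegenerate alternating bilinear forms ω and ω', and let V = W × W' with the symplectic form Ω((w₁,w₁'),(w₂,w₂')) = ω(w₁,w₂) + ω'(w₁',w₂'). Then for every Lagrangian subspace L ≤ V one has 2·(dim(L ∩ (0 × W')) − dim(L ∩ (W × 0))) = dim W' − dim W. In particular, if dim W = dim W', then the subspaces L ∩ (W × 0) and L ∩ (0 × W') have equal dimension. -/

import Mathlib

/-- Let `V = W × W'` carry the direct-sum symplectic form built from nondegenerate
alternating forms `ω`, `ω'` on `W`, `W'`.  For every Lagrangian subspace `L` one has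
`2·(dim(L ∩ (0 × W')) − dim(L ∩ (W × 0))) = dim W' − dim W`; in particular if
`dim W = dim W'` the two intersections have equal dimension. -/
theorem lagrangian_intersection_dimensions
    (K : Type*) [Field K]
    (W W' : Type*) [AddCommGroup W] [Module K W] [AddCommGroup W'] [Module K W']
    [FiniteDimensional K W] [FiniteDimensional K W']
    (ω : W →ₗ[K] W →ₗ[K] K) (ω' : W' →ₗ[K] W' →ₗ[K] K)
    (halt : ∀ w, ω w w = 0) (halt' : ∀ w, ω' w w = 0)
    (hnd : ∀ w, (∀ u, ω w u = 0) → w = 0)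
    (hnd' : ∀ w, (∀ u, ω' w u = 0) → w = 0)
    (L : Submodule K (W × W'))
    (hLisot : ∀ u ∈ L, ∀ v ∈ L, ω u.1 v.1 + ω' u.2 v.2 = 0)
    (hLdim : 2 * Module.finrank K ↥L = Module.finrank K (W × W')) :
    2 * ((Module.finrank K ↥(L ⊓ (⊥ : Submodule K W).prod (⊤ : Submodule K W')) : ℤ) -
          (Module.finrank K ↥(L ⊓ (⊤ : Submodule K W).prod (⊥ : Submodule K W')) : ℤ)) =
        (Module.finrank K W' : ℤ) - (Module.finrank K W : ℤ) ∧
    (Module.finrank K W = Module.finrank K W' →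
      Module.finrank K ↥(L ⊓ (⊤ : Submodule K W).prod (⊥ : Submodule K W')) =
        Module.finrank K ↥(L ⊓ (⊥ : Submodule K W).prod (⊤ : Submodule K W'))) := by
  classical
  -- the direct-sum symplectic form Ω on W × W'
  set Ω : LinearMap.BilinForm K (W × W') :=
    LinearMap.mk₂ K (fun u v => ω u.1 v.1 + ω' u.2 v.2)
      (fun u v w => by simp [add_add_add_comm])
      (fun c u v => by simp [mul_add])
      (fun u v w => by simp [add_add_add_comm])
      (fun c u v => by simp [mul_add]) with hΩ
  have hΩapp : ∀ u v : W × W', Ω u v = ω u.1 v.1 + ω' u.2 v.2 := fun u v => rfl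
  have hΩalt : Ω.IsAlt := fun u => by simp [hΩapp, halt, halt']
  have hΩrefl : Ω.IsRefl := hΩalt.isRefl
  have hωalt : ω.IsAlt := halt
  have hωrefl : ω.IsRefl := hωalt.isRefl
  have hΩnd : Ω.Nondegenerate := by
    refine (LinearMap.IsRefl.nondegenerate_iff_separatingLeft hΩrefl).mpr ?_
    intro u hu
    have h1 : u.1 = 0 := hnd u.1 (fun v => by simpa [hΩapp, halt'] using hu (v, u.2))
    have h2 : u.2 = 0 := hnd' u.2 (fun v => by simpa [hΩapp, halt] using hu (u.1, v))
    exact Prod.ext h1 h2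
  have hdimV : Module.finrank K (W × W') = Module.finrank K W + Module.finrank K W' :=
    Module.finrank_prod
  -- L is equal to its own Ω-orthogonal
  have hLorth : Ω.orthogonal L = L := by
    refine (Submodule.eq_of_le_of_finrank_le
      (fun u hu => by
        intro v hv
        have := hLisot v hv u hu
        simpa [LinearMap.BilinForm.IsOrtho, hΩapp] using this) ?_).symm
    rw [LinearMap.BilinForm.finrank_orthogonal hΩnd L]
    omega
  -- the ω-orthogonal of the projection of L to W is the slice L ∩ (W × 0)
  set A : Submodule K (W × W') := L ⊓ (⊤ : Submodule K W).prod (⊥ : Submodule K W') with hA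
  set B : Submodule K (W × W') := L ⊓ (⊥ : Submodule K W).prod (⊤ : Submodule K W') with hB
  have key : LinearMap.BilinForm.orthogonal ω (L.map (LinearMap.fst K W W')) = A.map (LinearMap.fst K W W') := by
    ext w
    constructor
    · intro hw
      have hmem : ((w, 0) : W × W') ∈ L := by
        rw [← hLorth]
        intro v hv
        have := hw v.1 ⟨v, hv, rfl⟩
        simpa [LinearMap.BilinForm.IsOrtho, hΩapp] using this
      exact ⟨(w, 0), ⟨hmem, by simp⟩, rfl⟩
    · rintro ⟨x, ⟨hxL, hxP⟩, rfl⟩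
      intro n hn
      obtain ⟨u, huL, rfl⟩ := hn
      have hx2 : x.2 = 0 := hxP.2
      have := hLisot u huL x hxL
      simpa [LinearMap.BilinForm.IsOrtho, hx2] using this
  -- dimension of the projected slice equals dimension of the slice
  have hAdim : Module.finrank K (A.map (LinearMap.fst K W W')) = Module.finrank K A := by
    set g := (LinearMap.fst K W W').domRestrict A with hg
    have hker : LinearMap.ker g = ⊥ := by
      rw [LinearMap.ker_eq_bot']
      rintro ⟨x, hxA⟩ hx
      have hx1 : x.1 = 0 := hx
      have hx2 : x.2 = 0 := hxA.2.2
      exact Subtype.ext (Prod.ext hx1 hx2)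
    have := LinearMap.finrank_range_add_finrank_ker g
    rw [hker] at this
    simp only [finrank_bot, add_zero] at this
    rw [← LinearMap.range_domRestrict A (LinearMap.fst K W W')]
    exact this
  -- rank-nullity for the projection of L to W
  set p := (LinearMap.fst K W W').domRestrict L with hp
  have hrange : LinearMap.range p = L.map (LinearMap.fst K W W') := by
    rw [hp, LinearMap.range_domRestrict]
  have hkerp : LinearMap.ker p = Submodule.comap L.subtype B := by
    ext x
    simp only [LinearMap.mem_ker, Submodule.mem_comap, hB, Submodule.mem_inf,
      Submodule.mem_prod, Submodule.mem_bot, Submodule.mem_top, and_true]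
    exact ⟨fun h => ⟨x.2, h⟩, fun h => h.2⟩
  have hkerdim : Module.finrank K (LinearMap.ker p) = Module.finrank K B := by
    rw [hkerp]
    exact LinearEquiv.finrank_eq (Submodule.comapSubtypeEquivOfLe inf_le_left)
  have hrn := LinearMap.finrank_range_add_finrank_ker p
  rw [hrange, hkerdim] at hrn
  -- orthogonality dimension count in W
  have horth := LinearMap.BilinForm.finrank_orthogonal (B := ω)
    ((LinearMap.IsRefl.nondegenerate_iff_separatingLeft hωrefl).mpr (fun w hw => hnd w hw))
    (L.map (LinearMap.fst K W W'))
  rw [key, hAdim] at horth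
  have hle : Module.finrank K (L.map (LinearMap.fst K W W')) ≤ Module.finrank K W :=
    Submodule.finrank_le _
  -- combine
  have h1 : 2 * ((Module.finrank K B : ℤ) - (Module.finrank K A : ℤ)) =
      (Module.finrank K W' : ℤ) - (Module.finrank K W : ℤ) := by
    rw [hdimV] at hLdim
    omega
  refine ⟨h1, fun heq => ?_⟩
  omega
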